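/- Let X, Y be Hilbert spaces, B : X → X and R : Y → Y positive self-adjoint boundedly invertible, A : X → Y bounded linear, and K = B A*(R + A B A*)^{-1}. Then for any φ₀ ∈ X and f ∈ Y, the Kalman update φ₁ = φ₀ + K(f − Aφ₀) is the unique minimizer over φ ∈ X of the functional J(φ) = ⟨R^{-1}(Aφ − f), Aφ − f⟩ + ⟨B^{-1}(φ − φ₀), φ − φ₀⟩. -/

import Mathlib

open ContinuousLinearMap
open scoped InnerProductSpace

section Aux
variable {X : Type*} [NormedAddCommGroup X] [InnerProductSpace ℂ X] [CompleteSpace X]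

lemma aux_re_inner_symm (u w : X) : (⟪u, w⟫_ℂ).re = (⟪w, u⟫_ℂ).re := by
  rw [← inner_conj_symm w u, Complex.conj_re]

lemma aux_selfAdjoint_inner (T : X →L[ℂ] X) (hT : IsSelfAdjoint T) (u w : X) :
    ⟪T u, w⟫_ℂ = ⟪u, T w⟫_ℂ := by
  conv_lhs => rw [← isSelfAdjoint_iff'.mp hT]
  exact adjoint_inner_left T w u

/-- If `T` is positive and `re ⟪T z, z⟫ = 0`, then `T z = 0` (Cauchy–Schwarz). -/
lemma aux_pos_inner_zero (T : X →L[ℂ] X) (hT : T.IsPositive) (z : X)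
    (hz : (⟪T z, z⟫_ℂ).re = 0) : T z = 0 := by
  have hsym := aux_selfAdjoint_inner T hT.isSelfAdjoint
  have key : ∀ v : X, (⟪T z, v⟫_ℂ).re = 0 := by
    intro v
    have hq : ∀ t : ℝ, 0 ≤ (⟪T v, v⟫_ℂ).re * t ^ 2 + 2 * (⟪T z, v⟫_ℂ).re * t := by
      intro t
      have h0 := hT.2 (z + (t : ℂ) • v)
      rw [ContinuousLinearMap.reApplyInnerSelf_apply, RCLike.re_to_complex] at h0
      have hexp : ⟪T (z + (t:ℂ) • v), z + (t:ℂ) • v⟫_ℂ =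
          ⟪T z, z⟫_ℂ + (t:ℂ) * ⟪T v, z⟫_ℂ + ((t:ℂ) * ⟪T z, v⟫_ℂ
            + ((t * t : ℝ) : ℂ) * ⟪T v, v⟫_ℂ) := by
        simp only [map_add, map_smul, inner_add_left, inner_add_right, inner_smul_left,
          inner_smul_right, Complex.conj_ofReal]
        push_cast
        ring
      rw [hexp] at h0
      have hrz : (⟪T v, z⟫_ℂ).re = (⟪T z, v⟫_ℂ).re := by
        rw [hsym v z, aux_re_inner_symm]
      simp only [Complex.add_re, Complex.mul_re, Complex.ofReal_re, Complex.ofReal_im] at h0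
      rw [hz, hrz] at h0
      nlinarith [h0]
    have ha : 0 ≤ (⟪T v, v⟫_ℂ).re := by
      have := hT.2 v
      rwa [ContinuousLinearMap.reApplyInnerSelf_apply, RCLike.re_to_complex] at this
    set a := (⟪T v, v⟫_ℂ).re with hadef
    set b := (⟪T z, v⟫_ℂ).re with hbdef
    have hpos : (0:ℝ) < a + 1 := by linarith
    set s : ℝ := -b / (a + 1) with hsdef
    have hs : s * (a + 1) = -b := by
      rw [hsdef]; field_simp
    have h1 := hq s
    have h2 : 0 ≤ (a * s ^ 2 + 2 * b * s) * ((a + 1) * (a + 1)) :=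
      mul_nonneg h1 (le_of_lt (mul_pos hpos hpos))
    have h3 : (a * s ^ 2 + 2 * b * s) * ((a + 1) * (a + 1)) =
        a * (s * (a + 1)) * (s * (a + 1)) + 2 * b * (s * (a + 1)) * (a + 1) := by ring
    rw [hs] at h3
    rw [h3] at h2
    have hb2 : b ^ 2 ≤ 0 := by nlinarith [sq_nonneg b]
    have : b ^ 2 = 0 := le_antisymm hb2 (sq_nonneg b)
    exact pow_eq_zero_iff two_ne_zero |>.mp this
  have key2 : ∀ v : X, ⟪T z, v⟫_ℂ = 0 := by
    intro v
    have h1 := key v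
    have h2 := key (Complex.I • v)
    rw [inner_smul_right] at h2
    simp only [Complex.mul_re, Complex.I_re, Complex.I_im] at h2
    apply Complex.ext <;> simp only [Complex.zero_re, Complex.zero_im] <;> linarith
  have := key2 (T z)
  rwa [inner_self_eq_zero] at this

/-- Inverse of a self-adjoint operator is self-adjoint. -/
lemma aux_inv_selfAdjoint (T Tinv : X →L[ℂ] X) (hT : IsSelfAdjoint T)
    (h2 : T.comp Tinv = ContinuousLinearMap.id ℂ X) : IsSelfAdjoint Tinv := by
  rw [isSelfAdjoint_iff'] at hT ⊢
  have hadj : (adjoint Tinv).comp T = ContinuousLinearMap.id ℂ X := by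
    have := congrArg adjoint h2
    rwa [adjoint_comp, adjoint_id, hT] at this
  calc adjoint Tinv = (adjoint Tinv).comp (T.comp Tinv) := by rw [h2]; rfl
    _ = ((adjoint Tinv).comp T).comp Tinv := by rw [ContinuousLinearMap.comp_assoc]
    _ = Tinv := by rw [hadj]; rfl

lemma aux_inv_inner_eq (T Tinv : X →L[ℂ] X) (hT : T.IsPositive)
    (h2 : T.comp Tinv = ContinuousLinearMap.id ℂ X) (x : X) :
    (⟪Tinv x, x⟫_ℂ).re = (⟪T (Tinv x), Tinv x⟫_ℂ).re := by
  have hTx : T (Tinv x) = x := congrFun (congrArg DFunLike.coe h2) x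
  calc (⟪Tinv x, x⟫_ℂ).re = (⟪Tinv x, T (Tinv x)⟫_ℂ).re := by rw [hTx]
    _ = (⟪T (Tinv x), Tinv x⟫_ℂ).re := aux_re_inner_symm _ _

/-- Nonnegativity for the inverse of a positive operator. -/
lemma aux_inv_inner_nonneg (T Tinv : X →L[ℂ] X) (hT : T.IsPositive)
    (h2 : T.comp Tinv = ContinuousLinearMap.id ℂ X) (x : X) :
    0 ≤ (⟪Tinv x, x⟫_ℂ).re := by
  rw [aux_inv_inner_eq T Tinv hT h2 x]
  exact hT.2 (Tinv x)

/-- Strict positivity of the inverse of a positive invertible operator. -/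
lemma aux_inv_inner_pos (T Tinv : X →L[ℂ] X) (hT : T.IsPositive)
    (h2 : T.comp Tinv = ContinuousLinearMap.id ℂ X) (x : X) (hx : x ≠ 0) :
    0 < (⟪Tinv x, x⟫_ℂ).re := by
  have hTx : T (Tinv x) = x := congrFun (congrArg DFunLike.coe h2) x
  rw [aux_inv_inner_eq T Tinv hT h2 x]
  rcases lt_or_eq_of_le (hT.2 (Tinv x)) with h | h
  · exact h
  · exfalso
    apply hx
    rw [← hTx]
    exact aux_pos_inner_zero T hT (Tinv x) h.symm

end Aux

/-- The Kalman update `φ₁ = φ₀ + K(f − Aφ₀)` with gain `K = B A* (R + A B A*)⁻¹` is the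
unique minimizer over `X` of the weighted Tikhonov functional
`J(φ) = ⟨R⁻¹(Aφ − f), Aφ − f⟩ + ⟨B⁻¹(φ − φ₀), φ − φ₀⟩`. -/
theorem kalman_update_unique_minimizer
    {X Y : Type*} [NormedAddCommGroup X] [InnerProductSpace ℂ X] [CompleteSpace X]
    [NormedAddCommGroup Y] [InnerProductSpace ℂ Y] [CompleteSpace Y]
    (A : X →L[ℂ] Y) (B : X →L[ℂ] X) (R : Y →L[ℂ] Y)
    (hB : B.IsPositive) (hR : R.IsPositive)
    (Binv : X →L[ℂ] X) (hBinv₁ : Binv.comp B = ContinuousLinearMap.id ℂ X)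
    (hBinv₂ : B.comp Binv = ContinuousLinearMap.id ℂ X)
    (Rinv : Y →L[ℂ] Y) (hRinv₁ : Rinv.comp R = ContinuousLinearMap.id ℂ Y)
    (hRinv₂ : R.comp Rinv = ContinuousLinearMap.id ℂ Y)
    (Sinv : Y →L[ℂ] Y)
    (hSinv₁ : Sinv.comp (R + A.comp (B.comp (adjoint A))) = ContinuousLinearMap.id ℂ Y)
    (hSinv₂ : (R + A.comp (B.comp (adjoint A))).comp Sinv = ContinuousLinearMap.id ℂ Y)
    (K : Y →L[ℂ] X) (hK : K = B.comp ((adjoint A).comp Sinv))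
    (φ₀ : X) (f : Y) (φ₁ : X) (hφ₁ : φ₁ = φ₀ + K (f - A φ₀)) :
    ∀ φ : X, φ ≠ φ₁ →
      (⟪Rinv (A φ₁ - f), A φ₁ - f⟫_ℂ).re + (⟪Binv (φ₁ - φ₀), φ₁ - φ₀⟫_ℂ).re <
      (⟪Rinv (A φ - f), A φ - f⟫_ℂ).re + (⟪Binv (φ - φ₀), φ - φ₀⟫_ℂ).re := by
  intro φ hφ
  have hRinvSA : IsSelfAdjoint Rinv := aux_inv_selfAdjoint R Rinv hR.isSelfAdjoint hRinv₂
  have hBinvSA : IsSelfAdjoint Binv := aux_inv_selfAdjoint B Binv hB.isSelfAdjoint hBinv₂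
  have hRinvR : ∀ y, Rinv (R y) = y := fun y => by
    have := congrFun (congrArg DFunLike.coe hRinv₁) y
    simpa using this
  have hBinvB : ∀ x, Binv (B x) = x := fun x => by
    have := congrFun (congrArg DFunLike.coe hBinv₁) x
    simpa using this
  have hSfull : ∀ y, R (Sinv y) + A (B (adjoint A (Sinv y))) = y := fun y => by
    have := congrFun (congrArg DFunLike.coe hSinv₂) y
    simpa using this
  set e := φ - φ₁ with he
  have he0 : e ≠ 0 := sub_ne_zero.mpr hφ
  set g := A φ₁ - f with hgdef
  set d := φ₁ - φ₀ with hddef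
  -- normal equation
  have hNE : adjoint A (Rinv g) + Binv d = 0 := by
    have hu := hSfull (f - A φ₀)
    set u := Sinv (f - A φ₀) with hudef
    have hd2 : d = B (adjoint A u) := by
      rw [hddef, hφ₁, hK]
      simp only [ContinuousLinearMap.comp_apply]
      abel
    have hg2 : g = -(R u) := by
      rw [hgdef, hφ₁, hK]
      simp only [ContinuousLinearMap.comp_apply, map_add]
      have hx : A (B (adjoint A u)) = (f - A φ₀) - R u := by
        rw [← hu]; abel
      rw [hx]; abel
    rw [hg2, map_neg, hRinvR u, map_neg, hd2, hBinvB (adjoint A u)]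
    abel
  -- decompositions
  have hAe : A φ - f = g + A e := by
    rw [hgdef, he, map_sub]; abel
  have hφe : φ - φ₀ = d + e := by
    rw [hddef, he]; abel
  have hexpand : (⟪Rinv (A φ - f), A φ - f⟫_ℂ).re + (⟪Binv (φ - φ₀), φ - φ₀⟫_ℂ).re
      = ((⟪Rinv g, g⟫_ℂ).re + (⟪Binv d, d⟫_ℂ).re)
        + 2 * ((⟪Rinv g, A e⟫_ℂ).re + (⟪Binv d, e⟫_ℂ).re)
        + ((⟪Rinv (A e), A e⟫_ℂ).re + (⟪Binv e, e⟫_ℂ).re) := by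
    rw [hAe, hφe]
    simp only [map_add, inner_add_left, inner_add_right, Complex.add_re]
    have r1 : (⟪Rinv (A e), g⟫_ℂ).re = (⟪Rinv g, A e⟫_ℂ).re := by
      rw [aux_selfAdjoint_inner Rinv hRinvSA, aux_re_inner_symm]
    have r2 : (⟪Binv e, d⟫_ℂ).re = (⟪Binv d, e⟫_ℂ).re := by
      rw [aux_selfAdjoint_inner Binv hBinvSA, aux_re_inner_symm]
    rw [r1, r2]; ring
  have hzero : (⟪Rinv g, A e⟫_ℂ).re + (⟪Binv d, e⟫_ℂ).re = 0 := by
    have h1 : ⟪Rinv g, A e⟫_ℂ = ⟪adjoint A (Rinv g), e⟫_ℂ :=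
      (adjoint_inner_left A e (Rinv g)).symm
    rw [h1, ← Complex.add_re, ← inner_add_left, hNE, inner_zero_left]
    rfl
  have p1 : 0 ≤ (⟪Rinv (A e), A e⟫_ℂ).re := aux_inv_inner_nonneg R Rinv hR hRinv₂ (A e)
  have p2 : 0 < (⟪Binv e, e⟫_ℂ).re := aux_inv_inner_pos B Binv hB hBinv₂ e he0
  rw [hexpand, hzero]
  linarith
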